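/- Define ψ₂(x,y) = ((z₁z₂e^{y-x} + z₁w₂ + w₁w₂e^{x-y})/f(P))·exp(x·f₁(P)/f(P) + y·f₂(P)/f(P)) for a fixed point P with f(P) ≠ 0, with f, f₁, f₂ as in Mironov's example. Then (1/4)(∂_x ψ₂ + ∂_y ψ₂) = (w₁z₂/f(P))·ψ₂. -/

import Mathlib

def mironovF (z₁ w₁ z₂ w₂ : ℂ) : ℂ := z₁ * z₂ + z₁ * w₂ + w₁ * w₂
def mironovF₁ (z₁ w₁ z₂ w₂ : ℂ) : ℂ := z₁ * z₂ + 2 * w₁ * z₂ - w₁ * w₂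
def mironovF₂ (z₁ w₁ z₂ w₂ : ℂ) : ℂ := -(z₁ * z₂) + 2 * w₁ * z₂ + w₁ * w₂

/-- ψ₂ is an eigenfunction of (1/4)(∂_x + ∂_y) with eigenvalue λ₁(P) = w₁z₂/f(P). -/
theorem mironov_psi₂_eigen (z₁ w₁ z₂ w₂ : ℂ) (hf : mironovF z₁ w₁ z₂ w₂ ≠ 0) :
    ∀ x y : ℂ,
      let ψ₂ : ℂ → ℂ → ℂ := fun x y =>
        ((z₁ * z₂ * Complex.exp (y - x) + z₁ * w₂ + w₁ * w₂ * Complex.exp (x - y)) /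
            mironovF z₁ w₁ z₂ w₂) *
          Complex.exp (x * (mironovF₁ z₁ w₁ z₂ w₂ / mironovF z₁ w₁ z₂ w₂) +
                       y * (mironovF₂ z₁ w₁ z₂ w₂ / mironovF z₁ w₁ z₂ w₂))
      (1 / 4) * (deriv (fun s => ψ₂ s y) x + deriv (fun s => ψ₂ x s) y) =
        (w₁ * z₂ / mironovF z₁ w₁ z₂ w₂) * ψ₂ x y := by
  intro x y ψ₂
  set F := mironovF z₁ w₁ z₂ w₂ with hF
  set a := mironovF₁ z₁ w₁ z₂ w₂ / F with ha
  set b := mironovF₂ z₁ w₁ z₂ w₂ / F with hb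
  -- derivative in x
  have hx : HasDerivAt (fun s : ℂ => ψ₂ s y)
      (((z₁ * z₂ * (Complex.exp (y - x) * (-1)) + w₁ * w₂ * (Complex.exp (x - y) * 1)) / F) *
        Complex.exp (x * a + y * b) +
       ((z₁ * z₂ * Complex.exp (y - x) + z₁ * w₂ + w₁ * w₂ * Complex.exp (x - y)) / F) *
        (Complex.exp (x * a + y * b) * a)) x := by
    have h1 : HasDerivAt (fun s : ℂ => z₁ * z₂ * Complex.exp (y - s) + z₁ * w₂ +
        w₁ * w₂ * Complex.exp (s - y))
        (z₁ * z₂ * (Complex.exp (y - x) * (-1)) + w₁ * w₂ * (Complex.exp (x - y) * 1)) x := by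
      have e1 := (((hasDerivAt_id x).const_sub y).cexp).const_mul (z₁ * z₂)
      have e2 := (((hasDerivAt_id x).sub_const y).cexp).const_mul (w₁ * w₂)
      simpa [Pi.add_def] using (e1.add_const (z₁ * w₂)).add e2
    have h2 : HasDerivAt (fun s : ℂ => Complex.exp (s * a + y * b))
        (Complex.exp (x * a + y * b) * a) x := by
      have := (((hasDerivAt_id x).mul_const a).add_const (y * b)).cexp
      simpa using this
    exact (h1.div_const F).mul h2
  have hy : HasDerivAt (fun s : ℂ => ψ₂ x s)
      (((z₁ * z₂ * (Complex.exp (y - x) * 1) + w₁ * w₂ * (Complex.exp (x - y) * (-1))) / F) *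
        Complex.exp (x * a + y * b) +
       ((z₁ * z₂ * Complex.exp (y - x) + z₁ * w₂ + w₁ * w₂ * Complex.exp (x - y)) / F) *
        (Complex.exp (x * a + y * b) * b)) y := by
    have h1 : HasDerivAt (fun s : ℂ => z₁ * z₂ * Complex.exp (s - x) + z₁ * w₂ +
        w₁ * w₂ * Complex.exp (x - s))
        (z₁ * z₂ * (Complex.exp (y - x) * 1) + w₁ * w₂ * (Complex.exp (x - y) * (-1))) y := by
      have e1 := (((hasDerivAt_id y).sub_const x).cexp).const_mul (z₁ * z₂)
      have e2 := (((hasDerivAt_id y).const_sub x).cexp).const_mul (w₁ * w₂)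
      simpa [Pi.add_def] using (e1.add_const (z₁ * w₂)).add e2
    have h2 : HasDerivAt (fun s : ℂ => Complex.exp (x * a + s * b))
        (Complex.exp (x * a + y * b) * b) y := by
      have := ((((hasDerivAt_id y).mul_const b).const_add (x * a))).cexp
      simpa using this
    exact (h1.div_const F).mul h2
  rw [hx.deriv, hy.deriv]
  show _ = (w₁ * z₂ / F) *
    (((z₁ * z₂ * Complex.exp (y - x) + z₁ * w₂ + w₁ * w₂ * Complex.exp (x - y)) / F) *
      Complex.exp (x * a + y * b))
  rw [ha, hb, hF]
  simp only [mironovF, mironovF₁, mironovF₂]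
  field_simp
  ring
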